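/- arXiv:1711.02362 — 2 statements merged into one kernel-verified Lean document; each statement's English description precedes it below -/
import Mathlib

section
/- The generalized Laguerre polynomials with parameter 1/2 satisfy the orthogonality relation: for all nonnegative integers n, m, the integral over (0,∞) of ζ^{1/2} e^{-ζ} L_n^{(1/2)}(ζ) L_m^{(1/2)}(ζ) dζ equals Γ(n+3/2)/n! if n = m and 0 otherwise. -/
open scoped Nat

noncomputable def laguerreHalf (n : ℕ) (x : ℝ) : ℝ :=
  ∑ k ∈ Finset.range (n + 1),
    (-1 : ℝ) ^ k *
      (Real.Gamma (n + 3 / 2) / (Real.Gamma (k + 3 / 2) * (n - k)! * k !)) * x ^ k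

open Finset

noncomputable def lagA (n j : ℕ) (c : ℝ) : ℝ :=
  ∑ k ∈ Finset.range (n + 1),
    (-1 : ℝ) ^ k * (n.choose k) * ∏ i ∈ Finset.range j, ((k : ℝ) + c + i)

lemma lagA_rec (n j : ℕ) (c : ℝ) :
    lagA (n + 1) (j + 1) c = -((j : ℝ) + 1) * lagA n j (c + 1) := by
  set f : ℕ → ℝ := fun k => ∏ i ∈ Finset.range (j + 1), ((k : ℝ) + c + i) with hf
  have hdiff : ∀ k : ℕ, f k - f (k + 1)
      = -((j : ℝ) + 1) * ∏ i ∈ Finset.range j, ((k : ℝ) + (c + 1) + i) := by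
    intro k
    have h1 : f (k + 1)
        = (∏ i ∈ Finset.range j, ((k : ℝ) + c + (i + 1))) * ((k : ℝ) + c + (j + 1)) := by
      rw [hf]
      rw [← Finset.prod_range_succ (fun i => (k : ℝ) + c + (i + 1)) j]
      apply Finset.prod_congr rfl
      intro i _; push_cast; ring
    have h2 : f k
        = (∏ i ∈ Finset.range j, ((k : ℝ) + c + (i + 1))) * ((k : ℝ) + c + 0) := by
      simp only [hf]
      rw [Finset.prod_range_succ' (fun i => (k : ℝ) + c + i) j]
      norm_num
    have h3 : (∏ i ∈ Finset.range j, ((k : ℝ) + c + (i + 1)))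
        = ∏ i ∈ Finset.range j, ((k : ℝ) + (c + 1) + i) := by
      apply Finset.prod_congr rfl; intro i _; push_cast; ring
    rw [h1, h2, h3]; push_cast; ring
  set h : ℕ → ℝ := fun k => (-1 : ℝ) ^ k * (n.choose k) * f k with hh
  have step1 : lagA (n + 1) (j + 1) c
      = h 0 + ∑ k ∈ Finset.range (n + 1),
          (-1 : ℝ) ^ (k + 1) * (((n + 1).choose (k + 1) : ℕ)) * f (k + 1) := by
    unfold lagA
    rw [Finset.sum_range_succ' (fun k => (-1 : ℝ) ^ k * ((n+1).choose k) * f k) (n + 1)]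
    rw [hh]
    simp [add_comm]
  have step2 : ∀ k : ℕ, (-1 : ℝ) ^ (k + 1) * (((n + 1).choose (k + 1) : ℕ)) * f (k + 1)
      = -((-1 : ℝ) ^ k * (n.choose k) * f (k + 1)) + h (k + 1) := by
    intro k
    rw [hh, Nat.choose_succ_succ]
    push_cast
    ring
  have step3 : ∑ k ∈ Finset.range (n + 1), h (k + 1)
      = ∑ k ∈ Finset.range (n + 1), h k - h 0 := by
    have := Finset.sum_range_succ' h (n + 1)
    have hlast : h (n + 1) = 0 := by
      rw [hh]; simp [Nat.choose_succ_self]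
    rw [Finset.sum_range_succ h (n + 1), hlast, add_zero] at this
    linarith [this]
  rw [step1]
  rw [Finset.sum_congr rfl (fun k _ => step2 k)]
  rw [Finset.sum_add_distrib, step3]
  have : lagA n j (c + 1) = ∑ k ∈ Finset.range (n + 1),
      (-1 : ℝ) ^ k * (n.choose k) * ∏ i ∈ Finset.range j, ((k : ℝ) + (c + 1) + i) := rfl
  rw [this, Finset.mul_sum]
  have final : ∀ k ∈ Finset.range (n + 1),
      -((-1 : ℝ) ^ k * (n.choose k) * f (k + 1)) + h k
      = -((j : ℝ) + 1) * ((-1 : ℝ) ^ k * (n.choose k) *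
          ∏ i ∈ Finset.range j, ((k : ℝ) + (c + 1) + i)) := by
    intro k _
    simp only [hh]
    linear_combination ((-1 : ℝ) ^ k * (n.choose k)) * hdiff k
  have goal2 : h 0 + (∑ k ∈ Finset.range (n + 1), -((-1 : ℝ) ^ k * (n.choose k) * f (k + 1))
      + (∑ k ∈ Finset.range (n + 1), h k - h 0))
      = ∑ k ∈ Finset.range (n + 1),
          (-((-1 : ℝ) ^ k * (n.choose k) * f (k + 1)) + h k) := by
    rw [Finset.sum_add_distrib]; ring
  rw [goal2]
  exact Finset.sum_congr rfl final

lemma lagA_zero (n : ℕ) : ∀ j, ∀ c : ℝ, j < n → lagA n j c = 0 := by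
  induction n with
  | zero => intro j c hj; omega
  | succ n ih =>
    intro j c hj
    cases j with
    | zero =>
      have hz := Int.alternating_sum_range_choose_of_ne (n := n + 1) (by omega)
      have : ((∑ i ∈ Finset.range (n + 2), (-1 : ℤ) ^ i * ((n+1).choose i) : ℤ) : ℝ) = 0 := by
        rw [hz]; norm_num
      unfold lagA
      push_cast at this
      simpa using this
    | succ j =>
      rw [lagA_rec, ih j (c + 1) (by omega), mul_zero]

lemma lagA_diag (n : ℕ) (c : ℝ) : lagA n n c = (-1 : ℝ) ^ n * n ! := by
  induction n generalizing c with
  | zero => simp [lagA]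
  | succ n ih =>
    rw [lagA_rec, ih (c + 1), Nat.factorial_succ]
    push_cast
    ring

lemma Gamma_add_nat' (x : ℝ) (hx : 0 < x) (l : ℕ) :
    Real.Gamma (x + l) = Real.Gamma x * ∏ i ∈ Finset.range l, (x + i) := by
  induction l with
  | zero => simp
  | succ l ih =>
    have hne : x + l ≠ 0 := by positivity
    have : x + (l + 1 : ℕ) = (x + l) + 1 := by push_cast; ring
    rw [this, Real.Gamma_add_one hne, Finset.prod_range_succ, ih]
    ring

noncomputable def lagC (n k : ℕ) : ℝ :=
  (-1 : ℝ) ^ k * (Real.Gamma (n + 3 / 2) / (Real.Gamma (k + 3 / 2) * (n - k)! * k !))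

lemma lag_inner (n l : ℕ) :
    ∑ k ∈ Finset.range (n + 1), lagC n k * Real.Gamma ((k : ℝ) + l + 3 / 2)
      = Real.Gamma ((n : ℝ) + 3 / 2) / n ! * lagA n l (3 / 2) := by
  unfold lagA
  rw [Finset.mul_sum]
  apply Finset.sum_congr rfl
  intro k hk
  have hk' : k ≤ n := by simpa [Nat.lt_succ_iff] using hk
  have hGk : Real.Gamma ((k : ℝ) + 3 / 2) ≠ 0 := by
    have : (0 : ℝ) < (k : ℝ) + 3 / 2 := by positivity
    exact (Real.Gamma_pos_of_pos this).ne'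
  have hG : Real.Gamma ((k : ℝ) + l + 3 / 2)
      = Real.Gamma ((k : ℝ) + 3 / 2) * ∏ i ∈ Finset.range l, ((k : ℝ) + 3 / 2 + i) := by
    have := Gamma_add_nat' ((k : ℝ) + 3 / 2) (by positivity) l
    rw [← this]
    ring_nf
  have hch : ((n.choose k : ℝ)) * k ! * (n - k)! = n ! := by
    exact_mod_cast Nat.choose_mul_factorial_mul_factorial hk'
  have hkf : (k ! : ℝ) ≠ 0 := by positivity
  have hnkf : ((n - k)! : ℝ) ≠ 0 := by positivity
  have hnf : (n ! : ℝ) ≠ 0 := by positivity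
  have hchnz : ((n.choose k : ℕ) : ℝ) ≠ 0 := by
    exact_mod_cast (Nat.choose_pos hk').ne'
  unfold lagC
  rw [hG, ← hch]
  field_simp

lemma laguerreHalf_eq (n : ℕ) (x : ℝ) :
    laguerreHalf n x = ∑ k ∈ Finset.range (n + 1), lagC n k * x ^ k := rfl

/-- Orthogonality of the generalized Laguerre polynomials with parameter `1/2`. -/
theorem laguerreHalf_orthogonality (n m : ℕ) :
    ∫ ζ in Set.Ioi (0 : ℝ),
        ζ ^ ((1 : ℝ) / 2) * Real.exp (-ζ) * laguerreHalf n ζ * laguerreHalf m ζ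
      = if n = m then Real.Gamma (n + 3 / 2) / n ! else 0 := by
  classical
  have hpt : ∀ x ∈ Set.Ioi (0 : ℝ),
      x ^ ((1 : ℝ) / 2) * Real.exp (-x) * laguerreHalf n x * laguerreHalf m x
        = ∑ k ∈ Finset.range (n + 1), ∑ l ∈ Finset.range (m + 1),
            lagC n k * lagC m l *
              (Real.exp (-x) * x ^ (((k : ℝ) + (l : ℝ) + 3 / 2) - 1)) := by
    intro x hx
    have hx0 : (0 : ℝ) < x := hx
    rw [laguerreHalf_eq, laguerreHalf_eq, mul_assoc, Finset.sum_mul_sum, Finset.mul_sum]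
    apply Finset.sum_congr rfl
    intro k _
    rw [Finset.mul_sum]
    apply Finset.sum_congr rfl
    intro l _
    have hxp : x ^ (((k : ℝ) + (l : ℝ) + 3 / 2) - 1)
        = x ^ (k : ℕ) * x ^ (l : ℕ) * x ^ ((1 : ℝ) / 2) := by
      rw [show ((k : ℝ) + (l : ℝ) + 3 / 2) - 1 = (k : ℝ) + ((l : ℝ) + 1 / 2) by ring,
        Real.rpow_add hx0, Real.rpow_add hx0, Real.rpow_natCast, Real.rpow_natCast,
        mul_assoc]
    rw [hxp]
    ring
  have hint1 : ∀ k l : ℕ, MeasureTheory.IntegrableOn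
      (fun x => lagC n k * lagC m l *
        (Real.exp (-x) * x ^ (((k : ℝ) + (l : ℝ) + 3 / 2) - 1))) (Set.Ioi 0) := by
    intro k l
    exact (Real.GammaIntegral_convergent (by positivity)).const_mul _
  have hval : (∫ ζ in Set.Ioi (0 : ℝ),
        ζ ^ ((1 : ℝ) / 2) * Real.exp (-ζ) * laguerreHalf n ζ * laguerreHalf m ζ)
      = ∑ k ∈ Finset.range (n + 1), ∑ l ∈ Finset.range (m + 1),
          lagC n k * lagC m l * Real.Gamma ((k : ℝ) + (l : ℝ) + 3 / 2) := by
    rw [MeasureTheory.setIntegral_congr_fun measurableSet_Ioi hpt,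
      MeasureTheory.integral_finset_sum _
        (fun k _ => MeasureTheory.integrable_finset_sum _ (fun l _ => hint1 k l))]
    apply Finset.sum_congr rfl
    intro k _
    rw [MeasureTheory.integral_finset_sum _ (fun l _ => hint1 k l)]
    apply Finset.sum_congr rfl
    intro l _
    rw [MeasureTheory.integral_const_mul,
      ← Real.Gamma_eq_integral (by positivity : (0:ℝ) < (k : ℝ) + (l : ℝ) + 3 / 2)]
  rw [hval]
  by_cases hnm : n = m
  · subst hnm
    rw [if_pos rfl]
    have hsplit : ∑ k ∈ Finset.range (n + 1), ∑ l ∈ Finset.range (n + 1),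
          lagC n k * lagC n l * Real.Gamma ((k : ℝ) + (l : ℝ) + 3 / 2)
        = ∑ l ∈ Finset.range (n + 1),
            lagC n l * (Real.Gamma ((n : ℝ) + 3 / 2) / n ! * lagA n l (3 / 2)) := by
      rw [Finset.sum_comm]
      apply Finset.sum_congr rfl
      intro l _
      rw [← lag_inner n l, Finset.mul_sum]
      apply Finset.sum_congr rfl
      intro k _
      ring
    rw [hsplit, Finset.sum_range_succ, Finset.sum_eq_zero
      (fun l hl => by rw [lagA_zero n l _ (Finset.mem_range.mp hl), mul_zero, mul_zero]),
      zero_add, lagA_diag]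
    have hG : Real.Gamma ((n : ℝ) + 3 / 2) ≠ 0 := by
      have : (0 : ℝ) < (n : ℝ) + 3 / 2 := by positivity
      exact (Real.Gamma_pos_of_pos this).ne'
    have hnf : (n ! : ℝ) ≠ 0 := by positivity
    unfold lagC
    rw [Nat.sub_self]
    field_simp
    ring_nf
    rw [mul_comm n 2, pow_mul]
    norm_num
  · rw [if_neg hnm]
    rcases Nat.lt_or_ge m n with hmn | hmn
    · have hsplit : ∑ k ∈ Finset.range (n + 1), ∑ l ∈ Finset.range (m + 1),
            lagC n k * lagC m l * Real.Gamma ((k : ℝ) + (l : ℝ) + 3 / 2)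
          = ∑ l ∈ Finset.range (m + 1),
              lagC m l * (Real.Gamma ((n : ℝ) + 3 / 2) / n ! * lagA n l (3 / 2)) := by
        rw [Finset.sum_comm]
        apply Finset.sum_congr rfl
        intro l _
        rw [← lag_inner n l, Finset.mul_sum]
        apply Finset.sum_congr rfl
        intro k _
        ring
      rw [hsplit]
      apply Finset.sum_eq_zero
      intro l hl
      have : l < n := by have := Finset.mem_range.mp hl; omega
      rw [lagA_zero n l _ this, mul_zero, mul_zero]
    · have hnm' : n < m := by omega
      have hsplit : ∑ k ∈ Finset.range (n + 1), ∑ l ∈ Finset.range (m + 1),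
            lagC n k * lagC m l * Real.Gamma ((k : ℝ) + (l : ℝ) + 3 / 2)
          = ∑ k ∈ Finset.range (n + 1),
              lagC n k * (Real.Gamma ((m : ℝ) + 3 / 2) / m ! * lagA m k (3 / 2)) := by
        apply Finset.sum_congr rfl
        intro k _
        rw [← lag_inner m k, Finset.mul_sum]
        apply Finset.sum_congr rfl
        intro l _
        rw [show (l : ℝ) + (k : ℝ) + 3 / 2 = (k : ℝ) + (l : ℝ) + 3 / 2 by ring]
        ring
      rw [hsplit]
      apply Finset.sum_eq_zero
      intro k hk
      have : k < m := by have := Finset.mem_range.mp hk; omega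
      rw [lagA_zero m k _ this, mul_zero, mul_zero]
end

section
/- Suppose the 2×2 matrix-valued spectral coefficients satisfy a(k)·conj(a(conj k)) + b(k)·conj(b(conj k)) = 1 together with the symmetries conj(a(−conj k)) = a(k), conj(b(−conj k)) = b(k), and the boundary relation a_−(k) = −i·conj(b_+(conj k)) on the segment (ic, −ic) of the imaginary axis (c > 0). Then the boundary values a_±(k) and b_±(k) are nonvanishing for every k in the open segment (−ic, ic). -/
open Complex Filter

/-- The open segment `(-ic, ic)` of the imaginary axis. -/
def imSegment (c : ℝ) : Set ℂ := {k : ℂ | k.re = 0 ∧ |k.im| < c}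

lemma mem_closure_re_pos (k : ℂ) (hk : k.re = 0) : k ∈ closure {z : ℂ | 0 < z.re} := by
  have h0 : Tendsto (fun n : ℕ => ((1 / (n + 1) : ℝ) : ℂ)) atTop (nhds 0) := by
    rw [show ((0:ℂ)) = ((0:ℝ):ℂ) by norm_num]
    exact (Complex.continuous_ofReal.tendsto 0).comp tendsto_one_div_add_atTop_nhds_zero_nat
  have h : Tendsto (fun n : ℕ => k + ((1 / (n + 1) : ℝ) : ℂ)) atTop (nhds k) := by
    simpa using tendsto_const_nhds.add h0
  refine mem_closure_of_tendsto h (Eventually.of_forall fun n => ?_)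
  simp only [Set.mem_setOf_eq, Complex.add_re, hk, Complex.ofReal_re]
  positivity

/-- If the spectral coefficients `a`, `b` (analytic off the segment `[-ic, ic]`) satisfy
`a(k)·conj(a(conj k)) + b(k)·conj(b(conj k)) = 1`, the symmetries `conj(a(-conj k)) = a(k)`,
`conj(b(-conj k)) = b(k)`, and the boundary relation `a₋(k) = -i·conj(b₊(conj k))` on the
segment, then the boundary values `a±(k)`, `b±(k)` are nonvanishing on `(-ic, ic)`. -/
theorem spectral_coefficients_nonvanishing (c : ℝ) (hc : 0 < c)
    (a b aP aM bP bM : ℂ → ℂ)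
    (huni : ∀ k : ℂ, k.re ≠ 0 →
      a k * (starRingEnd ℂ) (a ((starRingEnd ℂ) k))
        + b k * (starRingEnd ℂ) (b ((starRingEnd ℂ) k)) = 1)
    (hsyma : ∀ k : ℂ, k.re ≠ 0 → (starRingEnd ℂ) (a (-(starRingEnd ℂ) k)) = a k)
    (hsymb : ∀ k : ℂ, k.re ≠ 0 → (starRingEnd ℂ) (b (-(starRingEnd ℂ) k)) = b k)
    (haP : ∀ k ∈ imSegment c,
      Tendsto a (nhdsWithin k {z : ℂ | 0 < z.re}) (nhds (aP k)))
    (haM : ∀ k ∈ imSegment c,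
      Tendsto a (nhdsWithin k {z : ℂ | z.re < 0}) (nhds (aM k)))
    (hbP : ∀ k ∈ imSegment c,
      Tendsto b (nhdsWithin k {z : ℂ | 0 < z.re}) (nhds (bP k)))
    (hbM : ∀ k ∈ imSegment c,
      Tendsto b (nhdsWithin k {z : ℂ | z.re < 0}) (nhds (bM k)))
    (hrel : ∀ k ∈ imSegment c,
      aM k = -Complex.I * (starRingEnd ℂ) (bP ((starRingEnd ℂ) k))) :
    ∀ k ∈ imSegment c, aP k ≠ 0 ∧ aM k ≠ 0 ∧ bP k ≠ 0 ∧ bM k ≠ 0 := by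
  have hSPne : ∀ m : ℂ, m.re = 0 → (nhdsWithin m {z : ℂ | 0 < z.re}).NeBot :=
    fun m hm => mem_closure_iff_nhdsWithin_neBot.mp (mem_closure_re_pos m hm)
  have hconjmap : ∀ m : ℂ, m.re = 0 →
      Tendsto (starRingEnd ℂ) (nhdsWithin m {z : ℂ | 0 < z.re})
        (nhdsWithin (-m) {z : ℂ | 0 < z.re}) := by
    intro m hm
    have hc' : (starRingEnd ℂ) m = -m := by
      apply Complex.ext <;> simp [hm]
    have := (Complex.continuous_conj.continuousWithinAt
        (s := {z : ℂ | 0 < z.re}) (x := m)).tendsto_nhdsWithin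
        (t := {z : ℂ | 0 < z.re}) (fun z hz => by
          simp only [Set.mem_setOf_eq, Complex.conj_re] at hz ⊢; exact hz)
    rwa [hc'] at this
  have hnegmap : ∀ m : ℂ, m.re = 0 →
      Tendsto (fun z => -(starRingEnd ℂ) z) (nhdsWithin m {z : ℂ | 0 < z.re})
        (nhdsWithin m {z : ℂ | z.re < 0}) := by
    intro m hm
    have hc' : -(starRingEnd ℂ) m = m := by
      apply Complex.ext <;> simp [hm]
    have := ((Complex.continuous_conj.neg).continuousWithinAt
        (s := {z : ℂ | 0 < z.re}) (x := m)).tendsto_nhdsWithin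
        (t := {z : ℂ | z.re < 0}) (fun z hz => by
          simp only [Set.mem_setOf_eq, Pi.neg_apply, Complex.neg_re, Complex.conj_re] at hz ⊢
          linarith)
    rwa [Pi.neg_apply, hc'] at this
  have sym_a : ∀ m ∈ imSegment c, aP m = (starRingEnd ℂ) (aM m) := by
    intro m hm
    haveI := hSPne m hm.1
    have h2 : Tendsto (fun z => (starRingEnd ℂ) (a (-(starRingEnd ℂ) z)))
        (nhdsWithin m {z : ℂ | 0 < z.re}) (nhds ((starRingEnd ℂ) (aM m))) :=
      (Complex.continuous_conj.tendsto _).comp ((haM m hm).comp (hnegmap m hm.1))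
    have heq : ∀ᶠ z in nhdsWithin m {z : ℂ | 0 < z.re},
        a z = (starRingEnd ℂ) (a (-(starRingEnd ℂ) z)) := by
      filter_upwards [self_mem_nhdsWithin] with z hz
      exact (hsyma z (ne_of_gt hz)).symm
    exact tendsto_nhds_unique ((haP m hm).congr' heq) h2
  have sym_b : ∀ m ∈ imSegment c, bP m = (starRingEnd ℂ) (bM m) := by
    intro m hm
    haveI := hSPne m hm.1
    have h2 : Tendsto (fun z => (starRingEnd ℂ) (b (-(starRingEnd ℂ) z)))
        (nhdsWithin m {z : ℂ | 0 < z.re}) (nhds ((starRingEnd ℂ) (bM m))) :=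
      (Complex.continuous_conj.tendsto _).comp ((hbM m hm).comp (hnegmap m hm.1))
    have heq : ∀ᶠ z in nhdsWithin m {z : ℂ | 0 < z.re},
        b z = (starRingEnd ℂ) (b (-(starRingEnd ℂ) z)) := by
      filter_upwards [self_mem_nhdsWithin] with z hz
      exact (hsymb z (ne_of_gt hz)).symm
    exact tendsto_nhds_unique ((hbP m hm).congr' heq) h2
  have uni : ∀ m ∈ imSegment c,
      aP m * (starRingEnd ℂ) (aP (-m)) + bP m * (starRingEnd ℂ) (bP (-m)) = 1 := by
    intro m hm
    haveI := hSPne m hm.1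
    have hnm : -m ∈ imSegment c := ⟨by simp [hm.1], by simpa using hm.2⟩
    have ha2 : Tendsto (fun z => (starRingEnd ℂ) (a ((starRingEnd ℂ) z)))
        (nhdsWithin m {z : ℂ | 0 < z.re}) (nhds ((starRingEnd ℂ) (aP (-m)))) :=
      (Complex.continuous_conj.tendsto _).comp ((haP (-m) hnm).comp (hconjmap m hm.1))
    have hb2 : Tendsto (fun z => (starRingEnd ℂ) (b ((starRingEnd ℂ) z)))
        (nhdsWithin m {z : ℂ | 0 < z.re}) (nhds ((starRingEnd ℂ) (bP (-m)))) :=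
      (Complex.continuous_conj.tendsto _).comp ((hbP (-m) hnm).comp (hconjmap m hm.1))
    have hF : Tendsto (fun z => a z * (starRingEnd ℂ) (a ((starRingEnd ℂ) z))
          + b z * (starRingEnd ℂ) (b ((starRingEnd ℂ) z)))
        (nhdsWithin m {z : ℂ | 0 < z.re})
        (nhds (aP m * (starRingEnd ℂ) (aP (-m)) + bP m * (starRingEnd ℂ) (bP (-m)))) :=
      (((haP m hm).mul ha2).add ((hbP m hm).mul hb2))
    have heq : ∀ᶠ z in nhdsWithin m {z : ℂ | 0 < z.re},
        (fun z => a z * (starRingEnd ℂ) (a ((starRingEnd ℂ) z))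
          + b z * (starRingEnd ℂ) (b ((starRingEnd ℂ) z))) z = (1 : ℂ) := by
      filter_upwards [self_mem_nhdsWithin] with z hz
      exact huni z (ne_of_gt hz)
    exact tendsto_nhds_unique (hF.congr' heq) tendsto_const_nhds
  intro k hk
  have hkre := hk.1
  have hnk : -k ∈ imSegment c := ⟨by simp [hkre], by simpa using hk.2⟩
  have hck : (starRingEnd ℂ) k = -k := by apply Complex.ext <;> simp [hkre]
  have hcnk : (starRingEnd ℂ) (-k) = k := by rw [map_neg, hck, neg_neg]
  have hrelk : aM k = -Complex.I * (starRingEnd ℂ) (bP (-k)) := by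
    have := hrel k hk; rwa [hck] at this
  have hrelnk : aM (-k) = -Complex.I * (starRingEnd ℂ) (bP k) := by
    have := hrel (-k) hnk; rwa [hcnk] at this
  have haPk : aP k = Complex.I * bP (-k) := by
    rw [sym_a k hk, hrelk]; simp
  have haPnk : aP (-k) = Complex.I * bP k := by
    rw [sym_a (-k) hnk, hrelnk]; simp
  have hu := uni k hk
  rw [haPk, haPnk] at hu
  have hbPk : bP k ≠ 0 := by
    intro h; rw [h] at hu; simp at hu
  have hbPnk : bP (-k) ≠ 0 := by
    intro h; rw [h] at hu; simp at hu
  refine ⟨?_, ?_, hbPk, ?_⟩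
  · rw [haPk]; exact mul_ne_zero Complex.I_ne_zero hbPnk
  · rw [hrelk]
    refine mul_ne_zero (neg_ne_zero.mpr Complex.I_ne_zero) (by simpa using hbPnk)
  · intro h
    have := sym_b k hk
    rw [h] at this; simp at this; exact hbPk this
end
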